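/- Let V be a finite set, v ∈ V, N ⊆ V \ {v} with |N| = k ≥ 1, and let 𝒞 be a family of proper subsets of N. For a uniformly random linear ordering π of V, let B = {u ∈ N : u precedes v}. Suppose that for each i with d+1 ≤ i ≤ k−1, the number of i-element subsets of N contained in some member of 𝒞 is at most C(k−1, i), and no k-element subset (i.e. N itself) is contained in a member of 𝒞. Then P(|B| ≥ d+1 and B is not contained in any member of 𝒞) ≥ Σ_{i=d+1}^{k} (1/(k+1))·(i/k) = 1/2 − (1/2)·d(d+1)/(k(k+1)). -/

import Mathlib

open Finset Equiv


open Finset Equiv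

lemma exists_perm {V : Type*} [Fintype V] [DecidableEq V] (N S T : Finset V)
    (hS : S ⊆ N) (hT : T ⊆ N) (h : S.card = T.card) :
    ∃ g : Equiv.Perm V, (∀ x, x ∉ N → g x = x) ∧ (∀ x, x ∈ N → g x ∈ N) ∧
      (∀ x, x ∈ N → (g x ∈ S ↔ x ∈ T)) := by
  classical
  set A := {x : V // x ∈ N}
  have cT : Fintype.card {y : A // (y : V) ∈ T} = T.card := by
    rw [Fintype.card_congr (Equiv.subtypeSubtypeEquivSubtype (fun hx => hT hx))]
    simp [Fintype.card_coe]
  have cS : Fintype.card {y : A // (y : V) ∈ S} = S.card := by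
    rw [Fintype.card_congr (Equiv.subtypeSubtypeEquivSubtype (fun hx => hS hx))]
    simp [Fintype.card_coe]
  have e1 : {y : A // (y : V) ∈ T} ≃ {y : A // (y : V) ∈ S} :=
    Fintype.equivOfCardEq (by rw [cT, cS, h])
  have e2 : {y : A // ¬ (y : V) ∈ T} ≃ {y : A // ¬ (y : V) ∈ S} :=
    Fintype.equivOfCardEq (by
      rw [Fintype.card_subtype_compl, Fintype.card_subtype_compl, cT, cS, h])
  let p : Equiv.Perm A :=
    (Equiv.sumCompl (fun y : A => (y : V) ∈ T)).symm.trans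
      ((e1.sumCongr e2).trans (Equiv.sumCompl (fun y : A => (y : V) ∈ S)))
  have hp : ∀ y : A, ((p y : V) ∈ S ↔ (y : V) ∈ T) := by
    intro y
    by_cases hy : (y : V) ∈ T
    · have hpy : p y = (e1 ⟨y, hy⟩ : {y : A // (y : V) ∈ S}) := by
        rw [show p y = (sumCompl fun y : A => (y : V) ∈ S)
          (Sum.map (⇑e1) (⇑e2) ((sumCompl fun y : A => (y : V) ∈ T).symm y)) from rfl,
          Equiv.sumCompl_symm_apply_of_pos (p := fun y : A => (y : V) ∈ T) (a := y) hy, Sum.map_inl, Equiv.sumCompl_apply_inl]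
      rw [hpy]
      exact ⟨fun _ => hy, fun _ => (e1 ⟨y, hy⟩).2⟩
    · have hpy : p y = (e2 ⟨y, hy⟩ : {y : A // ¬ (y : V) ∈ S}) := by
        rw [show p y = (sumCompl fun y : A => (y : V) ∈ S)
          (Sum.map (⇑e1) (⇑e2) ((sumCompl fun y : A => (y : V) ∈ T).symm y)) from rfl,
          Equiv.sumCompl_symm_apply_of_neg (p := fun y : A => (y : V) ∈ T) (a := y) hy, Sum.map_inr, Equiv.sumCompl_apply_inr]
      rw [hpy]
      exact ⟨fun hc => absurd hc (e2 ⟨y, hy⟩).2, fun hc => absurd hc hy⟩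
  refine ⟨Equiv.Perm.subtypeCongr p (Equiv.refl {x : V // ¬ x ∈ N}), ?_, ?_, ?_⟩
  · intro x hx
    rw [Equiv.Perm.subtypeCongr.right_apply _ _ hx]
    rfl
  · intro x hx
    rw [Equiv.Perm.subtypeCongr.left_apply _ _ hx]
    exact (p ⟨x, hx⟩).2
  · intro x hx
    rw [Equiv.Perm.subtypeCongr.left_apply _ _ hx]
    exact hp ⟨x, hx⟩


section
variable {V : Type*} [Fintype V] [DecidableEq V]

lemma fib_card_eq (v : V) (N S T : Finset V) (hvN : v ∉ N)
    (hS : S ⊆ N) (hT : T ⊆ N) (h : S.card = T.card)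
    (hg1 : ∃ g : Equiv.Perm V, (∀ x, x ∉ N → g x = x) ∧ (∀ x, x ∈ N → g x ∈ N) ∧
      (∀ x, x ∈ N → (g x ∈ S ↔ x ∈ T))) :
    (univ.filter fun π : V ≃ Fin (Fintype.card V) =>
        N.filter (fun u => π u < π v) = S).card =
    (univ.filter fun π : V ≃ Fin (Fintype.card V) =>
        N.filter (fun u => π u < π v) = T).card := by
  obtain ⟨g, hg1, hg2, hg3⟩ := hg1
  have hgv : g v = v := hg1 v hvN
  have hsym1 : ∀ x, x ∉ N → g.symm x = x := by
    intro x hx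
    conv_lhs => rw [← hg1 x hx]
    simp
  have hsym2 : ∀ x, x ∈ N → g.symm x ∈ N := by
    intro x hx
    by_contra hc
    have := hg1 _ hc
    rw [Equiv.apply_symm_apply] at this
    rw [this] at hx
    exact hc hx
  have hsym3 : ∀ x, x ∈ N → (g.symm x ∈ T ↔ x ∈ S) := by
    intro x hx
    have h3 := hg3 (g.symm x) (hsym2 x hx)
    rw [Equiv.apply_symm_apply] at h3
    exact Iff.symm h3
  have hsymv : g.symm v = v := hsym1 v hvN
  refine Finset.card_bij' (fun π _ => (g : V ≃ V).trans π)
    (fun π _ => (g.symm : V ≃ V).trans π) ?_ ?_ ?_ ?_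
  · intro π hπ
    rw [mem_filter] at hπ ⊢
    refine ⟨mem_univ _, ?_⟩
    ext u
    simp only [mem_filter, Equiv.trans_apply, hgv]
    constructor
    · rintro ⟨hu, hlt⟩
      have : g u ∈ N.filter (fun w => π w < π v) := mem_filter.2 ⟨hg2 u hu, hlt⟩
      rw [hπ.2] at this
      exact (hg3 u hu).1 this
    · intro hu
      have huN := hT hu
      have : g u ∈ S := (hg3 u huN).2 hu
      rw [← hπ.2] at this
      exact ⟨huN, (mem_filter.1 this).2⟩
  · intro π hπ
    rw [mem_filter] at hπ ⊢
    refine ⟨mem_univ _, ?_⟩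
    ext u
    simp only [mem_filter, Equiv.trans_apply, hsymv]
    constructor
    · rintro ⟨hu, hlt⟩
      have : g.symm u ∈ N.filter (fun w => π w < π v) :=
        mem_filter.2 ⟨hsym2 u hu, hlt⟩
      rw [hπ.2] at this
      exact (hsym3 u hu).1 this
    · intro hu
      have huN := hS hu
      have : g.symm u ∈ T := (hsym3 u huN).2 hu
      rw [← hπ.2] at this
      exact ⟨huN, (mem_filter.1 this).2⟩
  · intro π _
    ext x
    simp
  · intro π _
    ext x
    simp

end


section
variable {V : Type*} [Fintype V] [DecidableEq V]

-- core: swapping π v with an extremal-high value a adds π.symm a to B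
lemma up_core (v : V) (N : Finset V) (hvN : v ∉ N) (π : V ≃ Fin (Fintype.card V))
    (a : Fin (Fintype.card V))
    (ham : π.symm a ∈ N.filter (fun u => π v < π u))
    (hmin : ∀ u ∈ N.filter (fun u => π v < π u), a ≤ π u) :
    N.filter (fun u => (π.trans (Equiv.swap (π v) a)) u < (π.trans (Equiv.swap (π v) a)) v)
      = insert (π.symm a) (N.filter (fun u => π u < π v)) := by
  obtain ⟨hmN, hma⟩ := mem_filter.1 ham
  rw [Equiv.apply_symm_apply] at hma
  have hva : π v ≠ a := ne_of_lt hma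
  have hπv : (π.trans (Equiv.swap (π v) a)) v = a := by
    simp [Equiv.swap_apply_left]
  ext u
  simp only [mem_filter, mem_insert, Equiv.trans_apply, hπv]
  rcases eq_or_ne u (π.symm a) with rfl | hu
  · simp only [Equiv.apply_symm_apply, Equiv.swap_apply_right]
    exact ⟨fun _ => Or.inl trivial, fun _ => ⟨hmN, hma⟩⟩
  · constructor
    · rintro ⟨huN, hlt⟩
      have huv : u ≠ v := by rintro rfl; exact hvN huN
      have hπu : π u ≠ π v := by
        intro hc; exact huv (π.injective hc)
      have hπua : π u ≠ a := by
        intro hc; apply hu; rw [← hc]; simp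
      rw [Equiv.swap_apply_of_ne_of_ne hπu hπua] at hlt
      right
      refine ⟨huN, ?_⟩
      by_contra hc
      push_neg at hc
      have : π v < π u := lt_of_le_of_ne hc (Ne.symm hπu)
      have := hmin u (mem_filter.2 ⟨huN, this⟩)
      exact absurd hlt (not_lt.2 this)
    · rintro (rfl | hmem)
      · exact absurd rfl hu
      · obtain ⟨huN, hlt⟩ := hmem
        have hπu : π u ≠ π v := ne_of_lt hlt
        have hπua : π u ≠ a := ne_of_lt (lt_trans hlt hma)
        rw [Equiv.swap_apply_of_ne_of_ne hπu hπua]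
        exact ⟨huN, lt_trans hlt hma⟩

end
section
variable {V : Type*} [Fintype V] [DecidableEq V]

lemma down_core (v : V) (N : Finset V) (hvN : v ∉ N) (π : V ≃ Fin (Fintype.card V))
    (b : Fin (Fintype.card V))
    (hbm : π.symm b ∈ N.filter (fun u => π u < π v))
    (hmax : ∀ u ∈ N.filter (fun u => π u < π v), π u ≤ b) :
    N.filter (fun u => (π.trans (Equiv.swap (π v) b)) u < (π.trans (Equiv.swap (π v) b)) v)
      = (N.filter (fun u => π u < π v)).erase (π.symm b) := by
  obtain ⟨hmN, hmb⟩ := mem_filter.1 hbm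
  rw [Equiv.apply_symm_apply] at hmb
  have hπv : (π.trans (Equiv.swap (π v) b)) v = b := by
    simp [Equiv.swap_apply_left]
  ext u
  simp only [mem_filter, mem_erase, Equiv.trans_apply, hπv]
  rcases eq_or_ne u (π.symm b) with rfl | hu
  · simp only [Equiv.apply_symm_apply, Equiv.swap_apply_right]
    constructor
    · rintro ⟨-, h⟩
      exact absurd h (not_lt.2 (le_of_lt hmb))
    · rintro ⟨hne, _⟩
      exact absurd rfl hne
  · constructor
    · rintro ⟨huN, hlt⟩
      have huv : u ≠ v := by rintro rfl; exact hvN huN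
      have hπu : π u ≠ π v := fun hc => huv (π.injective hc)
      have hπub : π u ≠ b := by
        intro hc; apply hu; rw [← hc]; simp
      rw [Equiv.swap_apply_of_ne_of_ne hπu hπub] at hlt
      exact ⟨hu, huN, lt_trans hlt hmb⟩
    · rintro ⟨-, huN, hlt⟩
      have huv : u ≠ v := by rintro rfl; exact hvN huN
      have hπu : π u ≠ π v := fun hc => huv (π.injective hc)
      have hπub : π u ≠ b := by
        intro hc; apply hu; rw [← hc]; simp
      rw [Equiv.swap_apply_of_ne_of_ne hπu hπub]
      exact ⟨huN, lt_of_le_of_ne (hmax u (mem_filter.2 ⟨huN, hlt⟩)) hπub⟩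

lemma inv_core (v : V) (π : V ≃ Fin (Fintype.card V)) (c : Fin (Fintype.card V)) :
    (π.trans (Equiv.swap (π v) c)).trans (Equiv.swap c (π v)) = π := by
  ext x
  simp only [Equiv.trans_apply]
  rw [Equiv.swap_comm c (π v), Equiv.swap_apply_self]

end
section
variable {V : Type*} [Fintype V] [DecidableEq V]

lemma cardBA (v : V) (N : Finset V) (hvN : v ∉ N) (π : V ≃ Fin (Fintype.card V)) :
    (N.filter fun u => π u < π v).card + (N.filter fun u => π v < π u).card = N.card := by
  have : (N.filter fun u => π v < π u) = (N.filter fun u => ¬ π u < π v) := by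
    apply Finset.filter_congr
    intro u hu
    have huv : u ≠ v := by rintro rfl; exact hvN hu
    have : π u ≠ π v := fun hc => huv (π.injective hc)
    constructor
    · intro h; exact not_lt.2 (le_of_lt h)
    · intro h; exact lt_of_le_of_ne (not_lt.1 h) (Ne.symm this)
  rw [this, Finset.card_filter_add_card_filter_not]

noncomputable def upF (v : V) (N : Finset V) (π : V ≃ Fin (Fintype.card V)) :
    V ≃ Fin (Fintype.card V) :=
  if h : (N.filter (fun u => π v < π u)).Nonempty then
    π.trans (Equiv.swap (π v) (((N.filter (fun u => π v < π u)).image π).min' (h.image π)))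
  else π

noncomputable def downF (v : V) (N : Finset V) (π : V ≃ Fin (Fintype.card V)) :
    V ≃ Fin (Fintype.card V) :=
  if h : (N.filter (fun u => π u < π v)).Nonempty then
    π.trans (Equiv.swap (π v) (((N.filter (fun u => π u < π v)).image π).max' (h.image π)))
  else π

lemma up_spec (v : V) (N : Finset V) (hvN : v ∉ N) (π : V ≃ Fin (Fintype.card V))
    (h : (N.filter (fun u => π v < π u)).Nonempty) :
    (N.filter (fun u => (upF v N π) u < (upF v N π) v)).card
        = (N.filter (fun u => π u < π v)).card + 1 ∧
    downF v N (upF v N π) = π := by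
  set A := N.filter (fun u => π v < π u) with hA
  set a := ((A.image π).min' (h.image π)) with ha
  have haimg : a ∈ A.image π := Finset.min'_mem _ _
  obtain ⟨m0, hm0A, hm0⟩ := Finset.mem_image.1 haimg
  have hmsym : π.symm a ∈ A := by rw [← hm0]; simpa using hm0A
  have hmin : ∀ u ∈ A, a ≤ π u := fun u hu => Finset.min'_le _ _ (Finset.mem_image_of_mem π hu)
  have hup : upF v N π = π.trans (Equiv.swap (π v) a) := by rw [upF, dif_pos h]
  have hcore := up_core v N hvN π a hmsym hmin
  have hmB : π.symm a ∉ N.filter (fun u => π u < π v) := by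
    intro hc
    have h1 := (mem_filter.1 hmsym).2
    have h2 := (mem_filter.1 hc).2
    rw [Equiv.apply_symm_apply] at h1 h2
    exact absurd h2 (not_lt.2 (le_of_lt h1))
  have hmain : N.filter (fun u => (upF v N π) u < (upF v N π) v)
      = insert (π.symm a) (N.filter (fun u => π u < π v)) := by rw [hup]; exact hcore
  constructor
  · rw [hmain, Finset.card_insert_of_notMem hmB]
  · -- compute downF of π'
    set π' := upF v N π with hπ'
    have hπ'v : π' v = a := by rw [hup]; simp [Equiv.swap_apply_left]
    have hπ'm : π' (π.symm a) = π v := by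
      rw [hup]; simp [Equiv.swap_apply_right]
    have hB' : N.filter (fun u => π' u < π' v) = insert (π.symm a) (N.filter (fun u => π u < π v)) := hmain
    have hne' : (N.filter (fun u => π' u < π' v)).Nonempty := by
      rw [hB']; exact Finset.insert_nonempty _ _
    have hmax' : ((N.filter (fun u => π' u < π' v)).image π').max' (hne'.image π') = π v := by
      apply le_antisymm
      · apply Finset.max'_le
        intro y hy
        obtain ⟨u, hu, rfl⟩ := Finset.mem_image.1 hy
        rw [hB'] at hu
        rcases Finset.mem_insert.1 hu with rfl | hu
        · rw [hπ'm]
        · obtain ⟨huN, hlt⟩ := mem_filter.1 hu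
          have huv : u ≠ v := by rintro rfl; exact hvN huN
          have h1 : π u ≠ π v := fun hc => huv (π.injective hc)
          have h2 : π u ≠ a := by
            have : π v < a := by
              have := (mem_filter.1 hmsym).2
              rwa [Equiv.apply_symm_apply] at this
            exact ne_of_lt (lt_trans hlt this)
          have : π' u = π u := by rw [hup]; simp [Equiv.swap_apply_of_ne_of_ne h1 h2]
          rw [this]; exact le_of_lt hlt
      · apply Finset.le_max'
        rw [← hπ'm]
        apply Finset.mem_image_of_mem
        rw [hB']; exact Finset.mem_insert_self _ _
    rw [downF, dif_pos hne', hmax', hπ'v, hup]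
    exact inv_core v π a

end
section
variable {V : Type*} [Fintype V] [DecidableEq V]

lemma down_spec (v : V) (N : Finset V) (hvN : v ∉ N) (π : V ≃ Fin (Fintype.card V))
    (h : (N.filter (fun u => π u < π v)).Nonempty) :
    (N.filter (fun u => (downF v N π) u < (downF v N π) v)).card
        = (N.filter (fun u => π u < π v)).card - 1 ∧
    upF v N (downF v N π) = π := by
  set B := N.filter (fun u => π u < π v) with hB
  set b := ((B.image π).max' (h.image π)) with hb
  have hbimg : b ∈ B.image π := Finset.max'_mem _ _
  obtain ⟨m0, hm0B, hm0⟩ := Finset.mem_image.1 hbimg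
  have hmsym : π.symm b ∈ B := by rw [← hm0]; simpa using hm0B
  have hmax : ∀ u ∈ B, π u ≤ b := fun u hu => Finset.le_max' _ _ (Finset.mem_image_of_mem π hu)
  have hdown : downF v N π = π.trans (Equiv.swap (π v) b) := by rw [downF, dif_pos h]
  have hcore := down_core v N hvN π b hmsym hmax
  have hmain : N.filter (fun u => (downF v N π) u < (downF v N π) v)
      = B.erase (π.symm b) := by rw [hdown]; exact hcore
  have hblt : b < π v := by
    have := (mem_filter.1 hmsym).2
    rwa [Equiv.apply_symm_apply] at this
  constructor
  · rw [hmain, Finset.card_erase_of_mem hmsym]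
  · set π'' := downF v N π with hπ''
    have hπ''v : π'' v = b := by rw [hdown]; simp [Equiv.swap_apply_left]
    have hπ''m : π'' (π.symm b) = π v := by
      rw [hdown]; simp [Equiv.swap_apply_right]
    have hmA : π.symm b ∈ N.filter (fun u => π'' v < π'' u) := by
      refine mem_filter.2 ⟨(mem_filter.1 hmsym).1, ?_⟩
      rw [hπ''v, hπ''m]; exact hblt
    have hne' : (N.filter (fun u => π'' v < π'' u)).Nonempty := ⟨_, hmA⟩
    have hmin' : ((N.filter (fun u => π'' v < π'' u)).image π'').min' (hne'.image π'') = π v := by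
      apply le_antisymm
      · apply Finset.min'_le
        rw [← hπ''m]
        exact Finset.mem_image_of_mem _ hmA
      · apply Finset.le_min'
        intro y hy
        obtain ⟨u, hu, rfl⟩ := Finset.mem_image.1 hy
        obtain ⟨huN, hgt⟩ := mem_filter.1 hu
        rcases eq_or_ne u (π.symm b) with rfl | hu'
        · rw [hπ''m]
        · have huv : u ≠ v := by rintro rfl; exact hvN huN
          have h1 : π u ≠ π v := fun hc => huv (π.injective hc)
          have h2 : π u ≠ b := by
            intro hc; apply hu'; rw [← hc]; simp
          have heq : π'' u = π u := by
            rw [hdown]; simp [Equiv.swap_apply_of_ne_of_ne h1 h2]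
          rw [heq]
          rw [hπ''v, heq] at hgt
          by_contra hc
          push_neg at hc
          have : u ∈ B := mem_filter.2 ⟨huN, hc⟩
          exact absurd hgt (not_lt.2 (hmax u this))
    rw [upF, dif_pos hne', hmin', hπ''v, hdown]
    exact inv_core v π b

lemma count_succ (v : V) (N : Finset V) (hvN : v ∉ N) (i : ℕ) (hik : i < N.card) :
    ((univ : Finset (V ≃ Fin (Fintype.card V))).filter
        (fun π => (N.filter (fun u => π u < π v)).card = i)).card =
    ((univ : Finset (V ≃ Fin (Fintype.card V))).filter
        (fun π => (N.filter (fun u => π u < π v)).card = i + 1)).card := by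
  refine Finset.card_bij' (fun π _ => upF v N π) (fun π _ => downF v N π) ?_ ?_ ?_ ?_
  · intro π hπ
    have hπ := (mem_filter.1 hπ).2
    have hAne : (N.filter (fun u => π v < π u)).Nonempty := by
      rw [← Finset.card_pos]
      have := cardBA v N hvN π
      omega
    exact mem_filter.2 ⟨mem_univ _, by rw [(up_spec v N hvN π hAne).1, hπ]⟩
  · intro π hπ
    have hπ := (mem_filter.1 hπ).2
    have hBne : (N.filter (fun u => π u < π v)).Nonempty := by
      rw [← Finset.card_pos]; omega
    refine mem_filter.2 ⟨mem_univ _, ?_⟩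
    rw [(down_spec v N hvN π hBne).1, hπ]
    omega
  · intro π hπ
    have hπ := (mem_filter.1 hπ).2
    have hAne : (N.filter (fun u => π v < π u)).Nonempty := by
      rw [← Finset.card_pos]
      have := cardBA v N hvN π
      omega
    exact (up_spec v N hvN π hAne).2
  · intro π hπ
    have hπ := (mem_filter.1 hπ).2
    have hBne : (N.filter (fun u => π u < π v)).Nonempty := by
      rw [← Finset.card_pos]; omega
    exact (down_spec v N hvN π hBne).2

end

lemma natkey (k i g : ℕ) (h1 : 1 ≤ i) (hik : i ≤ k)
    (hg : k.choose i ≤ (k-1).choose i + g) : i * k.choose i ≤ k * g := by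
  obtain ⟨j, rfl⟩ : ∃ j, i = j + 1 := ⟨i - 1, by omega⟩
  obtain ⟨l, rfl⟩ : ∃ l, k = l + 1 := ⟨k - 1, by omega⟩
  simp only [Nat.add_sub_cancel] at hg
  have pascal : (l+1).choose (j+1) = l.choose j + l.choose (j+1) := Nat.choose_succ_succ l j
  have hid : (l+1) * l.choose j = (l+1).choose (j+1) * (j+1) := Nat.add_one_mul_choose_eq l j
  have hlg : l.choose j ≤ g := by omega
  calc (j+1) * (l+1).choose (j+1) = (l+1) * l.choose j := by rw [hid]; ring
    _ ≤ (l+1) * g := Nat.mul_le_mul_left _ hlg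

lemma gaussQ (d k : ℕ) (h : d + 1 ≤ k) :
    ∑ i ∈ Finset.Icc (d+1) k, (i:ℚ) = ((k:ℚ)*(k+1) - d*(d+1))/2 := by
  have half : ∀ m : ℕ, (∑ i ∈ Finset.range (m+1), (i:ℚ)) * 2 = (m+1) * m := by
    intro m
    have hh := Finset.sum_range_id_mul_two (m+1)
    simp only [Nat.add_sub_cancel] at hh
    have h2 : ((∑ i ∈ Finset.range (m + 1), i : ℕ) : ℚ) * 2 = ((m+1) * m : ℕ) := by
      exact_mod_cast congrArg (Nat.cast : ℕ → ℚ) hh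
    push_cast at h2
    exact h2
  rw [← Finset.Ico_add_one_right_eq_Icc, Finset.sum_Ico_eq_sub (fun i => (i:ℚ)) (by omega)]
  have h1 := half k
  have h2 := half d
  -- range (k+1) sum minus range (d+1) sum
  have e1 : ∑ i ∈ Finset.range (k+1), (i:ℚ) = (k+1) * k / 2 := by linarith
  have e2 : ∑ i ∈ Finset.range (d+1), (i:ℚ) = (d+1) * d / 2 := by linarith
  rw [e1, e2]; ring

theorem stmt_10 {V : Type*} [Fintype V] [DecidableEq V] (v : V) (d k : ℕ)
    (hdk : d + 1 ≤ k) (N : Finset V) (hvN : v ∉ N) (hN : N.card = k)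
    (𝒞 : Finset (Finset V)) (h𝒞 : ∀ C ∈ 𝒞, C ⊂ N)
    (hcount : ∀ i, d + 1 ≤ i → i ≤ k - 1 →
      ((N.powersetCard i).filter (fun S => ∃ C ∈ 𝒞, S ⊆ C)).card ≤ (k - 1).choose i)
    (htop : ¬ ∃ C ∈ 𝒞, N ⊆ C) :
    (((Finset.univ : Finset (V ≃ Fin (Fintype.card V))).filter
        (fun π => d + 1 ≤ (N.filter (fun u => π u < π v)).card ∧
          ¬ ∃ C ∈ 𝒞, N.filter (fun u => π u < π v) ⊆ C)).card : ℚ) /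
      ((Fintype.card V).factorial : ℚ) ≥
    1 / 2 - (1 / 2) * ((d : ℚ) * ((d : ℚ) + 1)) / ((k : ℚ) * ((k : ℚ) + 1)) := by
  classical
  set B : (V ≃ Fin (Fintype.card V)) → Finset V :=
    fun π => N.filter (fun u => π u < π v) with hB
  set t : ℕ → ℕ := fun i =>
    ((univ : Finset (V ≃ Fin (Fintype.card V))).filter (fun π => (B π).card = i)).card with ht
  -- uniformity of |B|
  have htEq : ∀ i, i ≤ k → t i = t 0 := by
    intro i
    induction i with
    | zero => intro _; rfl
    | succ j ih =>
      intro hj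
      have := count_succ v N hvN j (by omega : j < N.card)
      rw [ht]
      simp only [hB]
      rw [← this]
      exact ih (by omega)
  -- total
  have hcardΩ : ((univ : Finset (V ≃ Fin (Fintype.card V)))).card = (Fintype.card V).factorial := by
    rw [Finset.card_univ, Fintype.card_equiv (Fintype.equivFin V)]
  have hsum : ∑ i ∈ Finset.range (k+1), t i = (Fintype.card V).factorial := by
    rw [← hcardΩ]
    rw [Finset.card_eq_sum_card_fiberwise (f := fun π => (B π).card)
      (t := Finset.range (k+1)) (fun π _ => by
        show (B π).card ∈ Finset.range (k+1)
        have : (B π).card ≤ N.card := Finset.card_filter_le _ _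
        rw [Finset.mem_range]; omega)]
  have hk1t0 : (k+1) * t 0 = (Fintype.card V).factorial := by
    rw [← hsum]
    rw [Finset.sum_congr rfl (fun i hi => htEq i (by rw [Finset.mem_range] at hi; omega))]
    simp [mul_comm]
  -- fiber counts
  have hfib : ∀ S : Finset V, S ⊆ N →
      (k.choose S.card) * ((univ : Finset (V ≃ Fin (Fintype.card V))).filter
        (fun π => B π = S)).card = t 0 := by
    intro S hSN
    have hSk : S.card ≤ k := by rw [← hN]; exact Finset.card_le_card hSN
    have step1 : t S.card = ∑ T ∈ N.powersetCard S.card,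
        ((univ : Finset (V ≃ Fin (Fintype.card V))).filter (fun π => B π = T)).card := by
      show ((univ : Finset (V ≃ Fin (Fintype.card V))).filter
        (fun π => (B π).card = S.card)).card = _
      rw [Finset.card_eq_sum_card_fiberwise (f := fun π => B π)
        (t := N.powersetCard S.card) (fun π hπ => by
          rw [Finset.mem_coe, Finset.mem_filter] at hπ
          exact Finset.mem_powersetCard.2 ⟨Finset.filter_subset _ _, hπ.2⟩)]
      refine Finset.sum_congr rfl (fun T hT => ?_)
      congr 1
      ext π
      simp only [Finset.mem_filter, Finset.mem_univ, true_and]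
      constructor
      · rintro ⟨-, h2⟩; exact h2
      · rintro rfl
        exact ⟨(Finset.mem_powersetCard.1 hT).2, rfl⟩
    have step2 : ∀ T ∈ N.powersetCard S.card,
        ((univ : Finset (V ≃ Fin (Fintype.card V))).filter (fun π => B π = T)).card =
        ((univ : Finset (V ≃ Fin (Fintype.card V))).filter (fun π => B π = S)).card := by
      intro T hT
      obtain ⟨hTN, hTc⟩ := Finset.mem_powersetCard.1 hT
      exact fib_card_eq v N T S hvN hTN hSN (by omega)
        (exists_perm N T S hTN hSN (by omega))
    rw [Finset.sum_congr rfl step2, Finset.sum_const, smul_eq_mul,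
      Finset.card_powersetCard, hN] at step1
    rw [← step1]
    exact htEq S.card hSk
  -- the good family
  set G : Finset (Finset V) := (N.powerset).filter
    (fun S => d + 1 ≤ S.card ∧ ¬ ∃ C ∈ 𝒞, S ⊆ C) with hG
  set X := ((Finset.univ : Finset (V ≃ Fin (Fintype.card V))).filter
        (fun π => d + 1 ≤ (N.filter (fun u => π u < π v)).card ∧
          ¬ ∃ C ∈ 𝒞, N.filter (fun u => π u < π v) ⊆ C)) with hX
  have hXsum : X.card = ∑ S ∈ G, ((univ : Finset (V ≃ Fin (Fintype.card V))).filter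
      (fun π => B π = S)).card := by
    rw [hX]
    rw [Finset.card_eq_sum_card_fiberwise (f := fun π => B π) (t := G) (fun π hπ => by
      rw [Finset.mem_coe, Finset.mem_filter] at hπ
      exact Finset.mem_filter.2 ⟨Finset.mem_powerset.2 (Finset.filter_subset _ _), hπ.2⟩)]
    refine Finset.sum_congr rfl (fun S hS => ?_)
    congr 1
    ext π
    rw [hG] at hS
    obtain ⟨hS1, hS2, hS3⟩ := Finset.mem_filter.1 hS |>.imp id (fun h => h)
    simp only [Finset.mem_filter, Finset.mem_univ, true_and]
    constructor
    · rintro ⟨-, h2⟩; exact h2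
    · rintro rfl
      exact ⟨⟨hS2, hS3⟩, rfl⟩
  -- count of good sets of each size
  have hGi : ∀ i ∈ Finset.Icc (d+1) k,
      k.choose i ≤ (k-1).choose i + (G.filter (fun S => S.card = i)).card := by
    intro i hi
    rw [Finset.mem_Icc] at hi
    have hGieq : G.filter (fun S => S.card = i) =
        (N.powersetCard i).filter (fun S => ¬ ∃ C ∈ 𝒞, S ⊆ C) := by
      ext S
      simp only [hG, Finset.mem_filter, Finset.mem_powerset, Finset.mem_powersetCard]
      constructor
      · rintro ⟨⟨h1, h2, h3⟩, h4⟩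
        exact ⟨⟨h1, h4⟩, h3⟩
      · rintro ⟨⟨h1, h2⟩, h3⟩
        exact ⟨⟨h1, by omega, h3⟩, h2⟩
    have hsplit := Finset.card_filter_add_card_filter_not
      (s := N.powersetCard i) (p := fun S => ∃ C ∈ 𝒞, S ⊆ C)
    rw [Finset.card_powersetCard, hN] at hsplit
    have hbad : ((N.powersetCard i).filter (fun S => ∃ C ∈ 𝒞, S ⊆ C)).card ≤ (k-1).choose i := by
      rcases Nat.lt_or_ge i k with hik | hik
      · exact hcount i hi.1 (by omega)
      · have hik' : i = k := by omega
        subst hik'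
        have : ((N.powersetCard i).filter (fun S => ∃ C ∈ 𝒞, S ⊆ C)) = ∅ := by
          rw [Finset.eq_empty_iff_forall_notMem]
          intro S hS
          rw [Finset.mem_filter, Finset.mem_powersetCard] at hS
          obtain ⟨⟨h1, h2⟩, h3⟩ := hS
          have : S = N := Finset.eq_of_subset_of_card_le h1 (by omega)
          subst this
          exact htop h3
        rw [this]
        simp
    rw [hGieq]
    omega
  -- rational computations
  have ht0pos : (0:ℚ) ≤ (t 0 : ℚ) := Nat.cast_nonneg _
  have hkpos : (0:ℚ) < (k:ℚ) := by exact_mod_cast (by omega : 0 < k)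
  have hperI : ∀ i ∈ Finset.Icc (d+1) k,
      (i:ℚ) * (t 0) / k ≤ ∑ S ∈ G.filter (fun S => S.card = i),
        (((univ : Finset (V ≃ Fin (Fintype.card V))).filter (fun π => B π = S)).card : ℚ) := by
    intro i hi
    have hi' := Finset.mem_Icc.1 hi
    have hCpos : (0:ℚ) < (k.choose i : ℚ) := by
      exact_mod_cast Nat.choose_pos (by omega : i ≤ k)
    have hterm : ∀ S ∈ G.filter (fun S => S.card = i),
        (((univ : Finset (V ≃ Fin (Fintype.card V))).filter (fun π => B π = S)).card : ℚ)
          = (t 0 : ℚ) / (k.choose i) := by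
      intro S hS
      rw [Finset.mem_filter] at hS
      obtain ⟨hSG, hSc⟩ := hS
      have hSN : S ⊆ N := Finset.mem_powerset.1 (Finset.mem_filter.1 hSG).1
      have := hfib S hSN
      rw [hSc] at this
      have : ((k.choose i : ℕ) : ℚ) * (((univ : Finset (V ≃ Fin (Fintype.card V))).filter
          (fun π => B π = S)).card : ℚ) = (t 0 : ℚ) := by exact_mod_cast this
      field_simp
      linarith [this]
    rw [Finset.sum_congr rfl hterm, Finset.sum_const, nsmul_eq_mul]
    set g := (G.filter (fun S => S.card = i)).card
    have hnat : i * k.choose i ≤ k * g := natkey k i g (by omega) hi'.2 (hGi i hi)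
    have hQ : (i:ℚ) * (k.choose i) ≤ (k:ℚ) * g := by exact_mod_cast hnat
    rw [div_le_iff₀ hkpos, div_eq_mul_inv]
    have expand : (g:ℚ) * ((t 0 : ℚ) * ((k.choose i : ℚ))⁻¹) * k
        = ((k:ℚ) * g) * ((t 0 : ℚ) * ((k.choose i : ℚ))⁻¹) := by ring
    rw [expand]
    calc (i:ℚ) * (t 0) = ((i:ℚ) * (k.choose i)) * ((t 0 : ℚ) * ((k.choose i : ℚ))⁻¹) := by
          field_simp
      _ ≤ ((k:ℚ) * g) * ((t 0 : ℚ) * ((k.choose i : ℚ))⁻¹) := by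
          apply mul_le_mul_of_nonneg_right hQ
          positivity
  -- sum over i
  have hfiber : ∑ i ∈ Finset.Icc (d+1) k, ∑ S ∈ G.filter (fun S => S.card = i),
      (((univ : Finset (V ≃ Fin (Fintype.card V))).filter (fun π => B π = S)).card : ℚ)
      = ∑ S ∈ G, (((univ : Finset (V ≃ Fin (Fintype.card V))).filter
          (fun π => B π = S)).card : ℚ) := by
    apply Finset.sum_fiberwise_of_maps_to
    intro S hS
    rw [hG, Finset.mem_filter, Finset.mem_powerset] at hS
    rw [Finset.mem_Icc]
    refine ⟨hS.2.1, ?_⟩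
    rw [← hN]
    exact Finset.card_le_card hS.1
  have hmain : ((k:ℚ)*(k+1) - d*(d+1))/2 * (t 0) / k ≤ (X.card : ℚ) := by
    have h1 : ∑ i ∈ Finset.Icc (d+1) k, (i:ℚ) * (t 0) / k
        ≤ ∑ S ∈ G, (((univ : Finset (V ≃ Fin (Fintype.card V))).filter
          (fun π => B π = S)).card : ℚ) := by
      rw [← hfiber]
      exact Finset.sum_le_sum hperI
    have h2 : ∑ i ∈ Finset.Icc (d+1) k, (i:ℚ) * (t 0) / k
        = ((k:ℚ)*(k+1) - d*(d+1))/2 * (t 0) / k := by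
      rw [← Finset.sum_div, ← Finset.sum_mul, gaussQ d k hdk]
    rw [← h2]
    have h3 : (X.card : ℚ) = ∑ S ∈ G, (((univ : Finset (V ≃ Fin (Fintype.card V))).filter
        (fun π => B π = S)).card : ℚ) := by
      rw [hXsum]
      push_cast
      rfl
    rw [h3]
    exact h1
  -- final algebra
  have hfacpos : (0:ℚ) < ((Fintype.card V).factorial : ℚ) := by
    exact_mod_cast Nat.factorial_pos _
  rw [ge_iff_le, div_eq_mul_inv, ← div_eq_mul_inv, le_div_iff₀ hfacpos]
  have hfac : ((Fintype.card V).factorial : ℚ) = ((k:ℚ)+1) * (t 0) := by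
    rw [← hk1t0]
    push_cast
    ring
  calc (1 / 2 - 1 / 2 * ((d:ℚ) * ((d:ℚ) + 1)) / ((k:ℚ) * ((k:ℚ) + 1))) *
        ((Fintype.card V).factorial : ℚ)
      = ((k:ℚ)*(k+1) - d*(d+1))/2 * (t 0) / k := by
        rw [hfac]
        have hk1 : (k:ℚ) + 1 ≠ 0 := by positivity
        field_simp
    _ ≤ (X.card : ℚ) := hmain
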